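/- For 1-in-k SAT with clauses on k distinct variables chosen uniformly without replacement from n variables with uniform independent negations, and two fixed n-bit strings z^1, z^0 with n_{ab} counting positions j where (z^1_j, z^0_j) = (a,b), the probability that both strings satisfy a random clause equals (1/2^k)·(1/C(n,k))·[k·C(n_{00}+n_{11}, k) + 2·C(n_{00}+n_{11}, k−2)·C(n_{01}+n_{10}, 2)]. -/

import Mathlib

/-- A bitstring `z` satisfies a 1-in-k SAT clause with scope `L` and negations `ν` iff
exactly one of the bits `z_j ⊕ ν_j`, `j ∈ L`, is true. -/
def oneInKSatisfies {n : ℕ} (z : Fin n → Bool) (L : Finset (Fin n)) (ν : Fin n → Bool) :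
    Prop :=
  (L.filter (fun j => xor (z j) (ν j) = true)).card = 1

instance {n : ℕ} (z : Fin n → Bool) (L : Finset (Fin n)) (ν : Fin n → Bool) :
    Decidable (oneInKSatisfies z L ν) := by unfold oneInKSatisfies; infer_instance

namespace OneInKAux

open Finset

variable {n : ℕ}

lemma bool_xor_cancel (a b c : Bool) (h : xor a b = c) : b = xor a c := by
  cases a <;> cases b <;> simp_all

/-- Number of functions agreeing with `g` on `L`. -/
lemma cylinder_card (L : Finset (Fin n)) (g : Fin n → Bool) :
    (univ.filter (fun ν : Fin n → Bool => ∀ j ∈ L, ν j = g j)).card = 2 ^ (n - L.card) := by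
  have h : (univ.filter (fun ν : Fin n → Bool => ∀ j ∈ L, ν j = g j)).card
      = (Lᶜ.powerset).card := by
    apply Finset.card_nbij' (i := fun ν : Fin n → Bool => Lᶜ.filter (fun j => ν j = true))
      (j := fun S : Finset (Fin n) => fun x => if x ∈ L then g x else decide (x ∈ S))
    · intro ν _; exact mem_powerset.2 (filter_subset _ _)
    · intro S _; simp only [mem_coe, mem_filter, mem_univ, true_and]
      intro j hj; simp [hj]
    · intro ν hν
      simp only [mem_coe, mem_filter, mem_univ, true_and] at hν
      funext x
      by_cases hx : x ∈ L
      · simp [hx, hν x hx]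
      · simp [hx, mem_compl]
    · intro S hS
      simp only [mem_coe, mem_powerset] at hS
      ext x
      simp only [mem_filter, mem_compl]
      constructor
      · rintro ⟨hx, h2⟩
        simpa [hx] using h2
      · intro hx
        have hxL : x ∉ L := fun h => (mem_compl.1 (hS hx)) h
        simp [hxL, hx]
  rw [h, card_powerset, card_compl, Fintype.card_fin]

variable (z1 z0 : Fin n → Bool)

/-- Validity of a pair of "unique true positions". -/
def Valid (L : Finset (Fin n)) (j1 j0 : Fin n) : Prop :=
  ∀ j ∈ L, xor (z1 j) (decide (j = j1)) = xor (z0 j) (decide (j = j0))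

instance (L : Finset (Fin n)) (j1 j0 : Fin n) : Decidable (Valid z1 z0 L j1 j0) := by
  unfold Valid; infer_instance

lemma sat_iff (L : Finset (Fin n)) (ν : Fin n → Bool) :
    (oneInKSatisfies z1 L ν ∧ oneInKSatisfies z0 L ν) ↔
      ∃ q ∈ (L ×ˢ L).filter (fun q => Valid z1 z0 L q.1 q.2),
        ∀ j ∈ L, ν j = xor (z1 j) (decide (j = q.1)) := by
  constructor
  · rintro ⟨h1, h0⟩
    obtain ⟨j1, hj1⟩ := Finset.card_eq_one.1 h1
    obtain ⟨j0, hj0⟩ := Finset.card_eq_one.1 h0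
    have hj1L : j1 ∈ L := (mem_filter.1 (hj1 ▸ mem_singleton_self j1)).1
    have hj0L : j0 ∈ L := (mem_filter.1 (hj0 ▸ mem_singleton_self j0)).1
    have key1 : ∀ j ∈ L, xor (z1 j) (ν j) = decide (j = j1) := by
      intro j hj
      by_cases hje : j = j1
      · subst hje
        have hmem : j ∈ L.filter (fun j => xor (z1 j) (ν j) = true) := by
          rw [hj1]; exact mem_singleton_self j
        have hd := (mem_filter.1 hmem).2
        simp [hd]
      · have : j ∉ L.filter (fun j => xor (z1 j) (ν j) = true) := by
          rw [hj1]; simpa using hje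
        simp only [mem_filter, hj, true_and] at this
        simp [hje, this]
    have key0 : ∀ j ∈ L, xor (z0 j) (ν j) = decide (j = j0) := by
      intro j hj
      by_cases hje : j = j0
      · subst hje
        have hmem : j ∈ L.filter (fun j => xor (z0 j) (ν j) = true) := by
          rw [hj0]; exact mem_singleton_self j
        have hd := (mem_filter.1 hmem).2
        simp [hd]
      · have : j ∉ L.filter (fun j => xor (z0 j) (ν j) = true) := by
          rw [hj0]; simpa using hje
        simp only [mem_filter, hj, true_and] at this
        simp [hje, this]
    refine ⟨(j1, j0), ?_, ?_⟩
    · refine mem_filter.2 ⟨mem_product.2 ⟨hj1L, hj0L⟩, ?_⟩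
      intro j hj
      have e1 := bool_xor_cancel _ _ _ (key1 j hj)
      have e0 := bool_xor_cancel _ _ _ (key0 j hj)
      rw [← e1, ← e0]
    · intro j hj
      exact bool_xor_cancel _ _ _ (key1 j hj)
  · rintro ⟨⟨j1, j0⟩, hq, hν⟩
    obtain ⟨hqm, hval⟩ := mem_filter.1 hq
    obtain ⟨hj1L, hj0L⟩ := mem_product.1 hqm
    change Valid z1 z0 L j1 j0 at hval
    change j1 ∈ L at hj1L
    change j0 ∈ L at hj0L
    change ∀ j ∈ L, ν j = xor (z1 j) (decide (j = j1)) at hν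
    constructor
    · show (L.filter (fun j => xor (z1 j) (ν j) = true)).card = 1
      have : L.filter (fun j => xor (z1 j) (ν j) = true) = {j1} := by
        ext j
        simp only [mem_filter, mem_singleton]
        constructor
        · rintro ⟨hj, hx⟩
          rw [hν j hj] at hx
          cases h1 : z1 j <;> simp_all
        · intro hje
          refine ⟨by rw [hje]; exact hj1L, ?_⟩
          rw [hje, hν j1 hj1L]
          cases hb : z1 j1 <;> simp
      rw [this, card_singleton]
    · show (L.filter (fun j => xor (z0 j) (ν j) = true)).card = 1
      have : L.filter (fun j => xor (z0 j) (ν j) = true) = {j0} := by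
        ext j
        simp only [mem_filter, mem_singleton]
        constructor
        · rintro ⟨hj, hx⟩
          rw [hν j hj, hval j hj] at hx
          cases h0 : z0 j <;> simp_all
        · intro hje
          refine ⟨by rw [hje]; exact hj0L, ?_⟩
          rw [hje, hν j0 hj0L, hval j0 hj0L]
          cases hb : z0 j0 <;> simp
      rw [this, card_singleton]

/-- The inner count over negations, for a fixed scope `L`. -/
lemma cnt_eq (L : Finset (Fin n)) :
    (univ.filter (fun ν : Fin n → Bool =>
        oneInKSatisfies z1 L ν ∧ oneInKSatisfies z0 L ν)).card
      = ((L ×ˢ L).filter (fun q => Valid z1 z0 L q.1 q.2)).card * 2 ^ (n - L.card) := by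
  have hset : univ.filter (fun ν : Fin n → Bool =>
        oneInKSatisfies z1 L ν ∧ oneInKSatisfies z0 L ν)
      = ((L ×ˢ L).filter (fun q => Valid z1 z0 L q.1 q.2)).biUnion
          (fun q => univ.filter (fun ν : Fin n → Bool =>
            ∀ j ∈ L, ν j = xor (z1 j) (decide (j = q.1)))) := by
    ext ν
    simp only [mem_biUnion, mem_filter, mem_univ, true_and]
    rw [sat_iff z1 z0 L ν]
    constructor
    · rintro ⟨q, hq, h⟩; exact ⟨q, mem_filter.1 hq, h⟩
    · rintro ⟨q, hq, h⟩; exact ⟨q, mem_filter.2 hq, h⟩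
  rw [hset, card_biUnion]
  · rw [Finset.sum_congr rfl (fun q _ => cylinder_card L (fun j => xor (z1 j) (decide (j = q.1)))),
      sum_const, smul_eq_mul]
  · rintro ⟨j1, j0⟩ hq ⟨j1', j0'⟩ hq' hne
    obtain ⟨hqm, hval⟩ := mem_filter.1 hq
    obtain ⟨hqm', hval'⟩ := mem_filter.1 hq'
    obtain ⟨hj1L, hj0L⟩ := mem_product.1 hqm
    obtain ⟨hj1L', hj0L'⟩ := mem_product.1 hqm'
    change Valid z1 z0 L j1 j0 at hval
    change Valid z1 z0 L j1' j0' at hval'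
    change j1 ∈ L at hj1L
    change j0 ∈ L at hj0L
    change j1' ∈ L at hj1L'
    change j0' ∈ L at hj0L'
    rw [Function.onFun, Finset.disjoint_left]
    intro ν hν hν'
    simp only [mem_filter, mem_univ, true_and] at hν hν'
    apply hne
    have e1 : j1 = j1' := by
      have h1 := hν j1 hj1L
      have h2 := hν' j1 hj1L
      rw [h1] at h2
      cases hb : z1 j1 <;> simp_all
    subst e1
    have e0 : j0 = j0' := by
      have v1 := hval j0 hj0L
      have v2 := hval' j0 hj0L
      have e := v1.symm.trans v2
      cases hb : z0 j0 <;> simp_all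
    subst e0
    rfl

lemma valid_diag (L : Finset (Fin n)) (j : Fin n) :
    Valid z1 z0 L j j ↔ ∀ i ∈ L, z1 i = z0 i := by
  unfold Valid
  refine forall₂_congr fun i _ => ?_
  cases hb1 : z1 i <;> cases hb0 : z0 i <;> cases h : decide (i = j) <;> simp_all

lemma valid_offdiag (L : Finset (Fin n)) (j1 j0 : Fin n) (h1 : j1 ∈ L) (h0 : j0 ∈ L)
    (hne : j1 ≠ j0) :
    Valid z1 z0 L j1 j0 ↔ L.filter (fun j => ¬ z1 j = z0 j) = {j1, j0} := by
  constructor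
  · intro hv
    ext j
    simp only [mem_filter, mem_insert, mem_singleton]
    constructor
    · rintro ⟨hj, hd⟩
      by_contra hc
      push_neg at hc
      have := hv j hj
      simp only [hc.1, hc.2, decide_eq_false, decide_false] at this
      cases hb1 : z1 j <;> cases hb0 : z0 j <;> simp_all
    · rintro (rfl | rfl)
      · refine ⟨h1, ?_⟩
        have := hv j h1
        have hd0 : decide (j = j0) = false := by simp [hne]
        simp only [decide_true, hd0] at this
        cases hb1 : z1 j <;> cases hb0 : z0 j <;> simp_all
      · refine ⟨h0, ?_⟩
        have := hv j h0
        have hd1 : decide (j = j1) = false := by simp [Ne.symm hne]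
        simp only [decide_true, hd1] at this
        cases hb1 : z1 j <;> cases hb0 : z0 j <;> simp_all
  · intro hf j hj
    by_cases e1 : j = j1
    · subst e1
      have : j ∈ L.filter (fun j => ¬ z1 j = z0 j) := by rw [hf]; simp
      have hd : ¬ z1 j = z0 j := (mem_filter.1 this).2
      have hd0 : decide (j = j0) = false := by simp [hne]
      simp only [decide_true, hd0]
      cases hb1 : z1 j <;> cases hb0 : z0 j <;> simp_all
    · by_cases e0 : j = j0
      · subst e0
        have : j ∈ L.filter (fun j => ¬ z1 j = z0 j) := by rw [hf]; simp
        have hd : ¬ z1 j = z0 j := (mem_filter.1 this).2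
        have hd1 : decide (j = j1) = false := by simp [e1]
        simp only [decide_true, hd1]
        cases hb1 : z1 j <;> cases hb0 : z0 j <;> simp_all
      · have : j ∉ L.filter (fun j => ¬ z1 j = z0 j) := by
          rw [hf]; simp [e1, e0]
        simp only [mem_filter, hj, true_and, not_not] at this
        have hd1 : decide (j = j1) = false := by simp [e1]
        have hd0 : decide (j = j0) = false := by simp [e0]
        rw [hd1, hd0, this]


lemma Vdiag_eq (L : Finset (Fin n)) :
    (((L ×ˢ L).filter (fun q => Valid z1 z0 L q.1 q.2)).filter (fun q => q.1 = q.2)).card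
      = if (∀ i ∈ L, z1 i = z0 i) then L.card else 0 := by
  by_cases hA : ∀ i ∈ L, z1 i = z0 i
  · rw [if_pos hA]
    apply Finset.card_nbij' (i := fun q => q.1) (j := fun a => (a, a))
    · intro q hq
      simp only [mem_coe, mem_filter] at hq
      exact (mem_product.1 hq.1.1).1
    · intro a ha
      simp only [mem_coe, mem_filter]
      exact ⟨⟨mem_product.2 ⟨ha, ha⟩, (valid_diag z1 z0 L a).2 hA⟩, by trivial⟩
    · intro q hq
      simp only [mem_coe, mem_filter] at hq
      obtain ⟨a, b⟩ := q
      simp only at hq ⊢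
      rw [hq.2]
    · intro a _; rfl
  · rw [if_neg hA, card_eq_zero, filter_eq_empty_iff]
    intro q hq
    obtain ⟨hqm, hv⟩ := mem_filter.1 hq
    intro he
    obtain ⟨a, b⟩ := q
    simp only at he
    subst he
    exact hA fun i hi => (valid_diag z1 z0 L a).1 hv i hi

lemma pair_cases {x y a b : Fin n} (hxy : x ≠ y) (hab : a ≠ b)
    (e : ({x, y} : Finset (Fin n)) = {a, b}) : (x = a ∧ y = b) ∨ (x = b ∧ y = a) := by
  have hx : x = a ∨ x = b := by
    have hm : x ∈ ({x, y} : Finset (Fin n)) := by simp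
    rw [e] at hm; simpa using hm
  have hy : y = a ∨ y = b := by
    have hm : y ∈ ({x, y} : Finset (Fin n)) := by simp
    rw [e] at hm; simpa using hm
  rcases hx with rfl | rfl <;> rcases hy with h | h <;> simp_all

lemma Voff_eq (L : Finset (Fin n)) :
    (((L ×ˢ L).filter (fun q => Valid z1 z0 L q.1 q.2)).filter (fun q => ¬ q.1 = q.2)).card
      = if (L.filter (fun j => ¬ z1 j = z0 j)).card = 2 then 2 else 0 := by
  by_cases h2 : (L.filter (fun j => ¬ z1 j = z0 j)).card = 2
  · rw [if_pos h2]
    obtain ⟨a, b, hab, hD⟩ := Finset.card_eq_two.1 h2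
    have haL : a ∈ L := by
      have : a ∈ L.filter (fun j => ¬ z1 j = z0 j) := by rw [hD]; simp
      exact (mem_filter.1 this).1
    have hbL : b ∈ L := by
      have : b ∈ L.filter (fun j => ¬ z1 j = z0 j) := by rw [hD]; simp
      exact (mem_filter.1 this).1
    have hset : ((L ×ˢ L).filter (fun q => Valid z1 z0 L q.1 q.2)).filter
          (fun q => ¬ q.1 = q.2) = {(a, b), (b, a)} := by
      ext ⟨x, y⟩
      simp only [mem_filter, mem_insert, mem_singleton, Prod.mk.injEq]
      constructor
      · rintro ⟨⟨hxy, hv⟩, hne⟩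
        obtain ⟨hx, hy⟩ := mem_product.1 hxy
        have hfe := (valid_offdiag z1 z0 L x y hx hy hne).1 hv
        have : ({x, y} : Finset (Fin n)) = {a, b} := by rw [← hfe, hD]
        exact pair_cases hne hab this
      · rintro (⟨rfl, rfl⟩ | ⟨rfl, rfl⟩)
        · exact ⟨⟨mem_product.2 ⟨haL, hbL⟩,
            (valid_offdiag z1 z0 L x y haL hbL hab).2 hD⟩, hab⟩
        · refine ⟨⟨mem_product.2 ⟨hbL, haL⟩,
            (valid_offdiag z1 z0 L x y hbL haL (Ne.symm hab)).2 ?_⟩, Ne.symm hab⟩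
          rw [hD, pair_comm]
    rw [hset]
    exact card_pair (by simp [Prod.ext_iff]; intro h; exact fun _ => hab h)
  · rw [if_neg h2, card_eq_zero, filter_eq_empty_iff]
    intro q hq
    obtain ⟨hqm, hv⟩ := mem_filter.1 hq
    obtain ⟨x, y⟩ := q
    obtain ⟨hx, hy⟩ := mem_product.1 hqm
    simp only [not_not]
    by_contra hne
    apply h2
    rw [(valid_offdiag z1 z0 L x y hx hy hne).1 hv]
    exact card_pair hne

lemma count_two (k : ℕ) (hk : 2 ≤ k) :
    ((powersetCard k (univ : Finset (Fin n))).filter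
        (fun L => (L.filter (fun j => ¬ z1 j = z0 j)).card = 2)).card
      = Nat.choose (univ.filter (fun j => ¬ z1 j = z0 j)).card 2 *
          Nat.choose (univ.filter (fun j => z1 j = z0 j)).card (k - 2) := by
  rw [← card_powersetCard, ← card_powersetCard, ← card_product]
  apply Finset.card_nbij'
    (i := fun L => (L.filter (fun j => ¬ z1 j = z0 j), L.filter (fun j => z1 j = z0 j)))
    (j := fun q => q.1 ∪ q.2)
  · intro L hL
    simp only [mem_coe, mem_filter] at hL
    obtain ⟨hP, h2⟩ := hL
    have hLk : L.card = k := (mem_powersetCard.1 hP).2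
    have hsum : (L.filter (fun j => z1 j = z0 j)).card
        + (L.filter (fun j => ¬ z1 j = z0 j)).card = L.card :=
      card_filter_add_card_filter_not _
    simp only [mem_coe, mem_product, mem_powersetCard]
    refine ⟨⟨fun x hx => ?_, h2⟩, fun x hx => ?_, by omega⟩
    · obtain ⟨hxL, hxd⟩ := mem_filter.1 hx
      exact mem_filter.2 ⟨mem_univ x, hxd⟩
    · obtain ⟨hxL, hxd⟩ := mem_filter.1 hx
      exact mem_filter.2 ⟨mem_univ x, hxd⟩
  · rintro ⟨P1, S⟩ hq
    simp only [mem_coe, mem_product, mem_powersetCard] at hq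
    obtain ⟨⟨hP1D, hP1c⟩, hSA, hSc⟩ := hq
    have hdisj : Disjoint P1 S := by
      rw [Finset.disjoint_left]
      intro x hx1 hx2
      exact (mem_filter.1 (hP1D hx1)).2 (mem_filter.1 (hSA hx2)).2
    have hfilt : (P1 ∪ S).filter (fun j => ¬ z1 j = z0 j) = P1 := by
      ext x
      simp only [mem_filter, mem_union]
      constructor
      · rintro ⟨hx | hx, hd⟩
        · exact hx
        · exact absurd (mem_filter.1 (hSA hx)).2 hd
      · intro hx
        exact ⟨Or.inl hx, (mem_filter.1 (hP1D hx)).2⟩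
    simp only [mem_coe, mem_filter, mem_powersetCard]
    refine ⟨⟨subset_univ _, ?_⟩, by rw [hfilt, hP1c]⟩
    rw [card_union_of_disjoint hdisj, hP1c, hSc]
    omega
  · intro L hL
    simp only
    rw [union_comm, filter_union_filter_not_eq]
  · rintro ⟨P1, S⟩ hq
    simp only [mem_coe, mem_product, mem_powersetCard] at hq
    obtain ⟨⟨hP1D, hP1c⟩, hSA, hSc⟩ := hq
    have hfilt : (P1 ∪ S).filter (fun j => ¬ z1 j = z0 j) = P1 := by
      ext x
      simp only [mem_filter, mem_union]
      constructor
      · rintro ⟨hx | hx, hd⟩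
        · exact hx
        · exact absurd (mem_filter.1 (hSA hx)).2 hd
      · intro hx
        exact ⟨Or.inl hx, (mem_filter.1 (hP1D hx)).2⟩
    have hfilt2 : (P1 ∪ S).filter (fun j => z1 j = z0 j) = S := by
      ext x
      simp only [mem_filter, mem_union]
      constructor
      · rintro ⟨hx | hx, hd⟩
        · exact absurd hd (mem_filter.1 (hP1D hx)).2
        · exact hx
      · intro hx
        exact ⟨Or.inr hx, (mem_filter.1 (hSA hx)).2⟩
    simp only [Prod.mk.injEq]
    exact ⟨hfilt, hfilt2⟩

lemma main_count (k : ℕ) (hk : 2 ≤ k) (hkn : k ≤ n) :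
    (((powersetCard k (Finset.univ : Finset (Fin n))) ×ˢ
        (Finset.univ : Finset (Fin n → Bool))).filter
      (fun p => oneInKSatisfies z1 p.1 p.2 ∧ oneInKSatisfies z0 p.1 p.2)).card
    = (k * Nat.choose (univ.filter (fun j => z1 j = z0 j)).card k
        + 2 * Nat.choose (univ.filter (fun j => z1 j = z0 j)).card (k - 2)
            * Nat.choose (univ.filter (fun j => ¬ z1 j = z0 j)).card 2) * 2 ^ (n - k) := by
  have hfib : (((powersetCard k (Finset.univ : Finset (Fin n))) ×ˢ
        (Finset.univ : Finset (Fin n → Bool))).filter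
      (fun p => oneInKSatisfies z1 p.1 p.2 ∧ oneInKSatisfies z0 p.1 p.2)).card
      = ∑ L ∈ powersetCard k (Finset.univ : Finset (Fin n)),
          (univ.filter (fun ν : Fin n → Bool =>
            oneInKSatisfies z1 L ν ∧ oneInKSatisfies z0 L ν)).card := by
    rw [Finset.card_eq_sum_card_fiberwise (f := Prod.fst)
      (t := powersetCard k (Finset.univ : Finset (Fin n)))
      (fun p hp => (mem_product.1 (mem_filter.1 hp).1).1)]
    apply Finset.sum_congr rfl
    intro L hL
    apply Finset.card_nbij' (i := fun p => p.2) (j := fun ν => (L, ν))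
    · rintro ⟨L', ν⟩ hp
      simp only [mem_coe, mem_filter] at hp ⊢
      obtain ⟨⟨hmem, hsat⟩, hfst⟩ := hp
      subst hfst
      exact ⟨mem_univ _, hsat⟩
    · intro ν hν
      simp only [mem_coe, mem_filter, mem_univ, true_and] at hν ⊢
      exact ⟨⟨mem_product.2 ⟨hL, mem_univ _⟩, hν⟩, by trivial⟩
    · rintro ⟨L', ν⟩ hp
      simp only [mem_coe, mem_filter] at hp
      obtain ⟨_, hfst⟩ := hp
      subst hfst
      rfl
    · intro ν _; rfl
  rw [hfib]
  have step1 : ∀ L ∈ powersetCard k (Finset.univ : Finset (Fin n)),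
      (univ.filter (fun ν : Fin n → Bool =>
        oneInKSatisfies z1 L ν ∧ oneInKSatisfies z0 L ν)).card
      = ((if (∀ i ∈ L, z1 i = z0 i) then k else 0)
          + (if (L.filter (fun j => ¬ z1 j = z0 j)).card = 2 then 2 else 0)) * 2 ^ (n - k) := by
    intro L hL
    have hLk : L.card = k := (mem_powersetCard.1 hL).2
    rw [cnt_eq z1 z0 L, hLk]
    congr 1
    rw [← card_filter_add_card_filter_not
      (s := (L ×ˢ L).filter (fun q => Valid z1 z0 L q.1 q.2))
      (p := fun q => q.1 = q.2)]
    rw [Vdiag_eq z1 z0 L, Voff_eq z1 z0 L, hLk]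
  rw [Finset.sum_congr rfl step1, ← Finset.sum_mul]
  congr 1
  rw [Finset.sum_add_distrib]
  have hdiag : ∑ L ∈ powersetCard k (Finset.univ : Finset (Fin n)),
      (if (∀ i ∈ L, z1 i = z0 i) then k else 0)
      = k * Nat.choose (univ.filter (fun j => z1 j = z0 j)).card k := by
    rw [Finset.sum_ite, Finset.sum_const, Finset.sum_const_zero, add_zero, smul_eq_mul]
    have hps : (powersetCard k (Finset.univ : Finset (Fin n))).filter
          (fun L => ∀ i ∈ L, z1 i = z0 i)
        = powersetCard k (univ.filter (fun j => z1 j = z0 j)) := by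
      ext L
      simp only [mem_filter, mem_powersetCard, subset_univ, true_and, Finset.subset_iff,
        mem_univ]
      tauto
    rw [hps, card_powersetCard, Nat.mul_comm]
  have hoff : ∑ L ∈ powersetCard k (Finset.univ : Finset (Fin n)),
      (if (L.filter (fun j => ¬ z1 j = z0 j)).card = 2 then 2 else 0)
      = 2 * Nat.choose (univ.filter (fun j => z1 j = z0 j)).card (k - 2)
          * Nat.choose (univ.filter (fun j => ¬ z1 j = z0 j)).card 2 := by
    rw [Finset.sum_ite, Finset.sum_const, Finset.sum_const_zero, add_zero, smul_eq_mul]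
    rw [count_two z1 z0 k hk]
    ring
  rw [hdiag, hoff]

end OneInKAux


/-- For two fixed `n`-bit strings `z¹, z⁰`, with `n_{ab}` counting positions where
`(z¹_j, z⁰_j) = (a,b)`, the probability over a random 1-in-k SAT clause (scope of `k`
distinct variables, uniform negations) that both strings satisfy the clause is
`(1/2^k)(1/C(n,k))·[k·C(n₀₀+n₁₁,k) + 2·C(n₀₀+n₁₁,k−2)·C(n₀₁+n₁₀,2)]`. -/
theorem one_in_k_sat_two_string_satisfaction_probability (n k : ℕ) (hk : 2 ≤ k)
    (hkn : k ≤ n) (z1 z0 : Fin n → Bool)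
    (ncfg : Bool × Bool → ℕ)
    (hcfg : ∀ a b : Bool,
      ncfg (a, b) = (Finset.univ.filter (fun j : Fin n => (z1 j, z0 j) = (a, b))).card) :
    (((((Finset.powersetCard k (Finset.univ : Finset (Fin n))) ×ˢ
          (Finset.univ : Finset (Fin n → Bool))).filter
        (fun p => oneInKSatisfies z1 p.1 p.2 ∧ oneInKSatisfies z0 p.1 p.2)).card : ℚ))
      / ((Nat.choose n k : ℚ) * 2 ^ n)
    = (1 / 2 ^ k) * (1 / (Nat.choose n k : ℚ)) *
        ((k : ℚ) * (Nat.choose (ncfg (false, false) + ncfg (true, true)) k : ℚ) +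
          2 * (Nat.choose (ncfg (false, false) + ncfg (true, true)) (k - 2) : ℚ) *
            (Nat.choose (ncfg (false, true) + ncfg (true, false)) 2 : ℚ)) := by
  have hs : ncfg (false, false) + ncfg (true, true)
      = (Finset.univ.filter (fun j : Fin n => z1 j = z0 j)).card := by
    rw [hcfg, hcfg]
    rw [← Finset.card_union_of_disjoint (by
      rw [Finset.disjoint_left]
      intro x hx1 hx2
      simp only [Finset.mem_filter, Prod.mk.injEq] at hx1 hx2
      simp_all)]
    congr 1
    ext j
    simp only [Finset.mem_union, Finset.mem_filter, Finset.mem_univ, true_and,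
      Prod.mk.injEq]
    cases hb1 : z1 j <;> cases hb0 : z0 j <;> simp
  have hd : ncfg (false, true) + ncfg (true, false)
      = (Finset.univ.filter (fun j : Fin n => ¬ z1 j = z0 j)).card := by
    rw [hcfg, hcfg]
    rw [← Finset.card_union_of_disjoint (by
      rw [Finset.disjoint_left]
      intro x hx1 hx2
      simp only [Finset.mem_filter, Prod.mk.injEq] at hx1 hx2
      simp_all)]
    congr 1
    ext j
    simp only [Finset.mem_union, Finset.mem_filter, Finset.mem_univ, true_and,
      Prod.mk.injEq]
    cases hb1 : z1 j <;> cases hb0 : z0 j <;> simp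
  rw [hs, hd, OneInKAux.main_count z1 z0 k hk hkn]
  have hC : ((Nat.choose n k : ℚ)) ≠ 0 := Nat.cast_ne_zero.2 (Nat.choose_pos hkn).ne'
  have hpow : (2 : ℚ) ^ n = 2 ^ (n - k) * 2 ^ k := by
    rw [← pow_add]
    congr 1
    omega
  push_cast
  rw [hpow]
  field_simp
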